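/- Let n ≥ 1 and let ψ : [0,1]^n → ℝ be monotonic and continuous with ψ(c·1) = c for all c ∈ [0,1]. Suppose that for all u, v, w ∈ [0,1]^n and all α ∈ (0,1): ψ(u) ≥ ψ(v) if and only if ψ(αu + (1−α)w) ≥ ψ(αv + (1−α)w). Then there exists μ ∈ Δ_n such that ψ(u) = Σ_{i=1}^n μ_i u_i for all u ∈ [0,1]^n. -/

import Mathlib

/-- Analytic core of the paper's Theorem 2 (relative utilitarianism): a
monotonic, continuous function on the unit cube with `ψ(c·1) = c` whose ranking
is invariant under mixtures with arbitrary common vectors is a weighted sum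
with weights in the probability simplex. -/
theorem stmt_8 {n : ℕ} (hn : 1 ≤ n) (ψ : (Fin n → ℝ) → ℝ)
    (hmono : ∀ u v : Fin n → ℝ, u ∈ Set.Icc (0 : Fin n → ℝ) 1 →
      v ∈ Set.Icc (0 : Fin n → ℝ) 1 → (∀ i, v i < u i) → ψ v < ψ u)
    (hcont : ContinuousOn ψ (Set.Icc (0 : Fin n → ℝ) 1))
    (hdiag : ∀ c : ℝ, c ∈ Set.Icc (0 : ℝ) 1 → ψ (fun _ => c) = c)
    (hmix : ∀ u v w : Fin n → ℝ, u ∈ Set.Icc (0 : Fin n → ℝ) 1 →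
      v ∈ Set.Icc (0 : Fin n → ℝ) 1 → w ∈ Set.Icc (0 : Fin n → ℝ) 1 →
      ∀ α ∈ Set.Ioo (0 : ℝ) 1,
      (ψ v ≤ ψ u ↔ ψ (α • v + (1 - α) • w) ≤ ψ (α • u + (1 - α) • w))) :
    ∃ μ : Fin n → ℝ, (∀ i, 0 ≤ μ i) ∧ (∑ i, μ i) = 1 ∧
      ∀ u ∈ Set.Icc (0 : Fin n → ℝ) 1, ψ u = ∑ i, μ i * u i := by
  set K := Set.Icc (0 : Fin n → ℝ) 1 with hK
  have hmem : ∀ u : Fin n → ℝ, (∀ i, 0 ≤ u i ∧ u i ≤ 1) → u ∈ K := by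
    intro u h
    exact ⟨fun i => (h i).1, fun i => (h i).2⟩
  have hmem' : ∀ u : Fin n → ℝ, u ∈ K → ∀ i, 0 ≤ u i ∧ u i ≤ 1 := by
    intro u h i
    exact ⟨h.1 i, h.2 i⟩
  have hconv : Convex ℝ K := convex_Icc _ _
  -- weak monotonicity
  have hwmono : ∀ u v : Fin n → ℝ, u ∈ K → v ∈ K → v ≤ u → ψ v ≤ ψ u := by
    intro u v hu hv hvu
    set F : ℝ → (Fin n → ℝ) := fun t => (1 - t) • u + t • (1 : Fin n → ℝ) with hF
    set G : ℝ → (Fin n → ℝ) := fun t => (1 - t) • v with hG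
    have hFmem : ∀ t ∈ Set.Icc (0:ℝ) 1, F t ∈ K := by
      intro t ht
      apply hmem
      intro i
      have h1 := (hmem' u hu i).1
      have h2 := (hmem' u hu i).2
      simp only [hF, Pi.add_apply, Pi.smul_apply, Pi.one_apply, smul_eq_mul, mul_one]
      constructor
      · nlinarith [ht.1, ht.2]
      · nlinarith [ht.1, ht.2]
    have hGmem : ∀ t ∈ Set.Icc (0:ℝ) 1, G t ∈ K := by
      intro t ht
      apply hmem
      intro i
      have h1 := (hmem' v hv i).1
      have h2 := (hmem' v hv i).2
      simp only [hG, Pi.smul_apply, smul_eq_mul]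
      constructor
      · nlinarith [ht.1, ht.2]
      · nlinarith [ht.1, ht.2]
    have hlt : ∀ t ∈ Set.Ioc (0:ℝ) 1, ψ (G t) < ψ (F t) := by
      intro t ht
      apply hmono _ _ (hFmem t ⟨ht.1.le, ht.2⟩) (hGmem t ⟨ht.1.le, ht.2⟩)
      intro i
      have h1 : (1 - t) * v i ≤ (1 - t) * u i := by
        have := hvu i
        nlinarith [ht.2]
      simp only [hF, hG, Pi.add_apply, Pi.smul_apply, Pi.one_apply, smul_eq_mul]
      nlinarith [ht.1]
    have hFcont : Continuous F := by
      apply Continuous.add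
      · exact (continuous_const.sub continuous_id).smul continuous_const
      · exact continuous_id.smul continuous_const
    have hGcont : Continuous G :=
      (continuous_const.sub continuous_id).smul continuous_const
    have hFc : ContinuousOn (fun t : ℝ => ψ (F t)) (Set.Icc (0:ℝ) 1) :=
      hcont.comp hFcont.continuousOn hFmem
    have hGc : ContinuousOn (fun t : ℝ => ψ (G t)) (Set.Icc (0:ℝ) 1) :=
      hcont.comp hGcont.continuousOn hGmem
    have h0m : (0:ℝ) ∈ Set.Icc (0:ℝ) 1 := ⟨le_refl _, zero_le_one⟩
    have hFt : Filter.Tendsto (fun t : ℝ => ψ (F t)) (nhdsWithin 0 (Set.Ioc 0 1)) (nhds (ψ u)) := by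
      have := (hFc 0 h0m).tendsto
      have hF0 : F 0 = u := by simp [hF]
      rw [hF0] at this
      exact this.mono_left (nhdsWithin_mono _ Set.Ioc_subset_Icc_self)
    have hGt : Filter.Tendsto (fun t : ℝ => ψ (G t)) (nhdsWithin 0 (Set.Ioc 0 1)) (nhds (ψ v)) := by
      have := (hGc 0 h0m).tendsto
      have hG0 : G 0 = v := by simp [hG]
      rw [hG0] at this
      exact this.mono_left (nhdsWithin_mono _ Set.Ioc_subset_Icc_self)
    have hne : (nhdsWithin (0:ℝ) (Set.Ioc 0 1)).NeBot := by
      rw [nhdsWithin_Ioc_eq_nhdsGT (by norm_num : (0:ℝ) < 1)]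
      infer_instance
    refine le_of_tendsto_of_tendsto hGt hFt ?_
    filter_upwards [self_mem_nhdsWithin] with t ht
    exact (hlt t ht).le
  have h0K : (0 : Fin n → ℝ) ∈ K := ⟨le_refl _, fun i => zero_le_one⟩
  have h1K : (1 : Fin n → ℝ) ∈ K := ⟨fun i => zero_le_one, le_refl _⟩
  have hψ0 : ψ 0 = 0 := by
    have := hdiag 0 ⟨le_refl _, zero_le_one⟩
    exact this
  have hψ1 : ψ 1 = 1 := by
    have := hdiag 1 ⟨zero_le_one, le_refl _⟩
    convert this using 2
    rfl
  have hrange : ∀ u ∈ K, ψ u ∈ Set.Icc (0:ℝ) 1 := by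
    intro u hu
    constructor
    · rw [← hψ0]; exact hwmono u 0 hu h0K hu.1
    · rw [← hψ1]; exact hwmono 1 u h1K hu hu.2
  -- equality version of mixture independence
  have hmixeq : ∀ u v w : Fin n → ℝ, u ∈ K → v ∈ K → w ∈ K →
      ∀ α ∈ Set.Ioo (0:ℝ) 1, ψ u = ψ v →
      ψ (α • u + (1 - α) • w) = ψ (α • v + (1 - α) • w) := by
    intro u v w hu hv hw α hα he
    exact le_antisymm ((hmix v u w hv hu hw α hα).1 he.le)
      ((hmix u v w hu hv hw α hα).1 he.ge)
  -- constant vectors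
  have hconstK : ∀ c : ℝ, c ∈ Set.Icc (0:ℝ) 1 → (fun _ : Fin n => c) ∈ K := by
    intro c hc
    exact ⟨fun i => hc.1, fun i => hc.2⟩
  -- affinity
  have haff : ∀ u v : Fin n → ℝ, u ∈ K → v ∈ K → ∀ α ∈ Set.Ioo (0:ℝ) 1,
      ψ (α • u + (1 - α) • v) = α * ψ u + (1 - α) * ψ v := by
    intro u v hu hv α hα
    set c := ψ u with hc
    set d := ψ v with hd
    have hcI := hrange u hu
    have hdI := hrange v hv
    have hcK := hconstK c hcI
    have hdK := hconstK d hdI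
    have e1 : ψ (α • u + (1 - α) • v) = ψ (α • (fun _ : Fin n => c) + (1 - α) • v) :=
      hmixeq u (fun _ => c) v hu hcK hv α hα ((hdiag c hcI).symm)
    have hα' : (1 - α) ∈ Set.Ioo (0:ℝ) 1 := ⟨by linarith [hα.2], by linarith [hα.1]⟩
    have e2 : ψ ((1 - α) • v + (1 - (1 - α)) • (fun _ : Fin n => c)) =
        ψ ((1 - α) • (fun _ : Fin n => d) + (1 - (1 - α)) • (fun _ : Fin n => c)) :=
      hmixeq v (fun _ => d) (fun _ => c) hv hdK hcK (1 - α) hα' ((hdiag d hdI).symm)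
    have hsimp : (1 - (1 - α)) = α := by ring
    rw [hsimp] at e2
    have e3 : α • (fun _ : Fin n => c) + (1 - α) • v = (1 - α) • v + α • (fun _ : Fin n => c) := by
      abel
    have e4 : (1 - α) • (fun _ : Fin n => d) + α • (fun _ : Fin n => c) =
        (fun _ : Fin n => α * c + (1 - α) * d) := by
      funext i
      simp only [Pi.add_apply, Pi.smul_apply, smul_eq_mul]
      ring
    have hcd : α * c + (1 - α) * d ∈ Set.Icc (0:ℝ) 1 := by
      constructor
      · nlinarith [hcI.1, hdI.1, hα.1, hα.2]
      · nlinarith [hcI.2, hdI.2, hα.1, hα.2]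
    rw [e1, e3, e2, e4, hdiag _ hcd]
  -- scaling
  have hscale : ∀ u ∈ K, ∀ t ∈ Set.Icc (0:ℝ) 1, ψ (t • u) = t * ψ u := by
    intro u hu t ht
    rcases eq_or_lt_of_le ht.1 with h0 | h0
    · rw [← h0]; simp [hψ0]
    rcases eq_or_lt_of_le ht.2 with h1 | h1
    · rw [h1]; simp
    have := haff u 0 hu h0K t ⟨h0, h1⟩
    simpa [hψ0] using this
  -- additivity
  have hadd : ∀ u v : Fin n → ℝ, u ∈ K → v ∈ K → u + v ∈ K →
      ψ (u + v) = ψ u + ψ v := by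
    intro u v hu hv huv
    have h2 : ((1:ℝ)/2) ∈ Set.Ioo (0:ℝ) 1 := by norm_num
    have e1 := haff u v hu hv (1/2) h2
    have e2 := hscale (u + v) huv (1/2) ⟨by norm_num, by norm_num⟩
    have e3 : ((1:ℝ)/2) • u + (1 - (1:ℝ)/2) • v = ((1:ℝ)/2) • (u + v) := by
      rw [smul_add]; norm_num
    rw [e3, e2] at e1
    linarith
  -- the weights
  set μ : Fin n → ℝ := fun i => ψ (Pi.single i 1) with hμ
  have hsingleK : ∀ (i : Fin n) (t : ℝ), t ∈ Set.Icc (0:ℝ) 1 → Pi.single i t ∈ K := by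
    intro i t ht
    apply hmem
    intro j
    rcases eq_or_ne j i with rfl | hji
    · simpa using ht
    · simp [Pi.single_apply, hji]
  have hsingle : ∀ (i : Fin n) (t : ℝ), t ∈ Set.Icc (0:ℝ) 1 →
      ψ (Pi.single i t) = t * μ i := by
    intro i t ht
    have : Pi.single i t = t • (Pi.single i 1 : Fin n → ℝ) := by
      funext j
      rcases eq_or_ne j i with rfl | hji
      · simp
      · simp [Pi.single_apply, hji]
    rw [this, hscale _ (hsingleK i 1 ⟨zero_le_one, le_refl _⟩) t ht]
  -- restriction lemma
  have hres : ∀ s : Finset (Fin n), ∀ u : Fin n → ℝ, u ∈ K →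
      ψ (fun i => if i ∈ s then u i else 0) = ∑ i ∈ s, μ i * u i := by
    intro s
    induction s using Finset.induction with
    | empty => intro u hu; simpa [Pi.zero_def] using hψ0
    | @insert a s ha ih =>
      intro u hu
      have hdecomp : (fun i => if i ∈ insert a s then u i else 0) =
          Pi.single a (u a) + (fun i => if i ∈ s then u i else 0) := by
        funext j
        rcases eq_or_ne j a with rfl | hja
        · simp [ha]
        · simp [Pi.single_apply, hja, Finset.mem_insert, hja]
      have huv := hmem' u hu
      have hsK : (fun i => if i ∈ s then u i else 0) ∈ K := by
        apply hmem; intro i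
        by_cases h : i ∈ s <;> simp [h, huv i, (huv i).1, (huv i).2]
      have hiK : Pi.single a (u a) ∈ K := hsingleK a (u a) ⟨(huv a).1, (huv a).2⟩
      have hsumK : Pi.single a (u a) + (fun i => if i ∈ s then u i else 0) ∈ K := by
        rw [← hdecomp]
        apply hmem; intro i
        by_cases h : i ∈ insert a s <;> simp [h, huv i, (huv i).1, (huv i).2]
      rw [hdecomp, hadd _ _ hiK hsK hsumK, ih u hu,
        hsingle a (u a) ⟨(huv a).1, (huv a).2⟩, Finset.sum_insert ha]
      ring
  refine ⟨μ, ?_, ?_, ?_⟩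
  · intro i
    rw [← hψ0]
    exact hwmono _ 0 (hsingleK i 1 ⟨zero_le_one, le_refl _⟩) h0K
      (hsingleK i 1 ⟨zero_le_one, le_refl _⟩).1
  · have h := hres Finset.univ 1 h1K
    simp only [Finset.mem_univ, if_true, Pi.one_apply, mul_one] at h
    rw [← h]
    exact hdiag 1 ⟨zero_le_one, le_refl _⟩
  · intro u hu
    have h := hres Finset.univ u hu
    simpa only [Finset.mem_univ, if_true] using h
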